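/- For every irreducible representation α of S(n−2k) and every irreducible representation μ of S(n−k) with m_α, m_μ ≠ 0 and μ ∈ α: tr_{(k)}(F_μ(α)) = m_{μ/α}·(m_α/m_μ)·P_μ, where tr_{(k)} is the partial trace over factors n−2k+1,…,n−k and P_μ is the Young projector of μ acting on the first n−k factors. Consequently the full trace is tr(F_μ(α)) = m_{μ/α}·m_α·d_μ. -/

import Mathlib

open scoped BigOperators
open scoped Classical
open scoped ComplexOrder
open Matrix

noncomputable section

/-- Square matrices on the computational basis of `(ℂ^d)^{⊗ n}`. -/
abbrev Mat (d n : ℕ) := Matrix (Fin n → Fin d) (Fin n → Fin d) ℂ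

/-- The unitary permuting the tensor factors according to `σ`. -/
def Vperm (d n : ℕ) (σ : Equiv.Perm (Fin n)) : Mat d n :=
  Matrix.of fun f g => if f ∘ σ = g then (1 : ℂ) else 0

/-- Orthogonal projector onto the maximally entangled state of factors `r` and `s`,
tensored with the identity on the remaining factors. -/
def Pplus (d n : ℕ) (r s : Fin n) : Mat d n :=
  Matrix.of fun f g =>
    if f r = f s ∧ g r = g s ∧ ∀ t : Fin n, t ≠ r → t ≠ s → f t = g t
    then (1 : ℂ) / d else 0

/-- `V^{(k)} = d^k · P⁺_{n-2k+1,n} ⋯ P⁺_{n-k,n-k+1}` on `n = a + 2k` factors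
(`a = n - 2k`), tensored with the identity on the remaining factors. -/
def Vk (d a k : ℕ) : Mat d (a + k + k) :=
  ((d : ℂ) ^ k) •
    ((List.finRange k).map fun j : Fin k =>
      Pplus d (a + k + k) ⟨a + (j : ℕ), by have := j.isLt; omega⟩
        ⟨a + k + k - 1 - (j : ℕ), by have := j.isLt; omega⟩).prod

/-- Extension of an operator on the first `m` factors by the identity on the rest. -/
def extOp {d m n : ℕ} (h : m ≤ n) (X : Mat d m) : Mat d n :=
  Matrix.of fun f g =>
    if ∀ i : Fin n, m ≤ (i : ℕ) → f i = g i
    then X (fun i => f (Fin.castLE h i)) (fun i => g (Fin.castLE h i)) else 0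

def splice {d a b : ℕ} (f : Fin a → Fin d) (t : Fin b → Fin d) : Fin (a + b) → Fin d :=
  fun i => if h : (i : ℕ) < a then f ⟨i, h⟩ else t ⟨(i : ℕ) - a, by have := i.isLt; omega⟩

/-- Partial trace over the last `b` tensor factors. -/
def ptraceLast {d : ℕ} (a b : ℕ) (X : Mat d (a + b)) : Mat d a :=
  Matrix.of fun f g => ∑ t : Fin b → Fin d, X (splice f t) (splice g t)

def finLtEquiv {m n : ℕ} (h : m ≤ n) : Fin m ≃ {i : Fin n // (i : ℕ) < m} where
  toFun i := ⟨⟨(i : ℕ), lt_of_lt_of_le i.isLt h⟩, i.isLt⟩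
  invFun j := ⟨(j.1 : ℕ), j.2⟩
  left_inv i := rfl
  right_inv j := rfl

/-- The embedding of `S(m)` into `S(n)`, acting on the first `m` letters. -/
def permExt {m n : ℕ} (h : m ≤ n) (σ : Equiv.Perm (Fin m)) : Equiv.Perm (Fin n) :=
  σ.extendDomain (finLtEquiv h)

/-- A unitary irreducible matrix representation (Schur's criterion). -/
def IsUnitaryIrrep {G : Type*} [Group G] {e : ℕ}
    (φ : G →* Matrix (Fin e) (Fin e) ℂ) : Prop :=
  (∀ g, (φ g)ᴴ * φ g = 1) ∧
  ∀ X : Matrix (Fin e) (Fin e) ℂ, (∀ g, X * φ g = φ g * X) →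
    ∃ c : ℂ, X = c • (1 : Matrix (Fin e) (Fin e) ℂ)

/-- Operator basis `E^μ_{ij} = (d_μ/m!) Σ_τ φ^μ_{ji}(τ⁻¹) V_τ` on the first `m` factors. -/
def Eop (d m : ℕ) {e : ℕ} (φ : Equiv.Perm (Fin m) →* Matrix (Fin e) (Fin e) ℂ)
    (i j : Fin e) : Mat d m :=
  ((e : ℂ) / (Nat.factorial m : ℂ)) •
    ∑ τ : Equiv.Perm (Fin m), φ τ⁻¹ j i • Vperm d m τ

/-- Young projector `P_μ = Σ_i E^μ_{ii}`. -/
def Pop (d m : ℕ) {e : ℕ} (φ : Equiv.Perm (Fin m) →* Matrix (Fin e) (Fin e) ℂ) : Mat d m :=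
  ∑ i : Fin e, Eop d m φ i i

/-- Schur–Weyl multiplicity `m_μ = tr(P_μ)/d_μ` (a real number). -/
def multSW (d m : ℕ) {e : ℕ} (φ : Equiv.Perm (Fin m) →* Matrix (Fin e) (Fin e) ℂ) : ℝ :=
  (Matrix.trace (Pop d m φ)).re / (e : ℝ)

/-- A family of concrete unitary irreducible matrix representations of `S(a)`. -/
structure IrrepFamily (a : ℕ) where
  Label : Type
  [instFintype : Fintype Label]
  [instDecEq : DecidableEq Label]
  dim : Label → ℕ
  dim_pos : ∀ ℓ, 0 < dim ℓ
  rep : ∀ ℓ, Equiv.Perm (Fin a) →* Matrix (Fin (dim ℓ)) (Fin (dim ℓ)) ℂ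
  irrep : ∀ ℓ, IsUnitaryIrrep (rep ℓ)

attribute [instance] IrrepFamily.instFintype IrrepFamily.instDecEq

/-- An irreducible unitary representation of `S(a+k)` in PRIR form relative to the chain
`S(a+k) ⊃ ⋯ ⊃ S(a)`: the restriction to `S(a)` is block diagonal, the blocks being
indexed by branching paths, the block of every path ending at the irrep `α` of `S(a)`
being one and the same fixed matrix irrep `Φ.rep α`. -/
structure PRIRData (a k : ℕ) (Φ : IrrepFamily a) (e : ℕ) where
  rep : Equiv.Perm (Fin (a + k)) →* Matrix (Fin e) (Fin e) ℂ
  irrep : IsUnitaryIrrep rep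
  Path : Type
  [instFintypePath : Fintype Path]
  [instDecEqPath : DecidableEq Path]
  endOf : Path → Φ.Label
  basis : ((r : Path) × Fin (Φ.dim (endOf r))) ≃ Fin e
  block_diag : ∀ (h : Equiv.Perm (Fin a)) (r : Path) (l l' : Fin (Φ.dim (endOf r))),
      rep (permExt (Nat.le_add_right a k) h) (basis ⟨r, l⟩) (basis ⟨r, l'⟩)
        = Φ.rep (endOf r) h l l'
  block_off : ∀ (h : Equiv.Perm (Fin a)) (r r' : Path), r ≠ r' →
      ∀ (l : Fin (Φ.dim (endOf r))) (l' : Fin (Φ.dim (endOf r'))),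
      rep (permExt (Nat.le_add_right a k) h) (basis ⟨r, l⟩) (basis ⟨r', l'⟩) = 0

attribute [instance] PRIRData.instFintypePath PRIRData.instDecEqPath

/-- The number of paths `m_{μ/α}`, i.e. the multiplicity of `α` in the restriction. -/
def PRIRData.pathMult {a k : ℕ} {Φ : IrrepFamily a} {e : ℕ}
    (P : PRIRData a k Φ e) (α : Φ.Label) : ℕ :=
  Fintype.card {r : P.Path // P.endOf r = α}

/-- The basis operators
`F^{r_{μ/α} r_{ν/α}}_{i_μ j_ν} = (m_α/√(m_μ m_ν)) E^μ_{i_μ,(r,1_α)} V^{(k)} E^ν_{(s,1_α),j_ν}`. -/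
def Fop (d a k : ℕ) (Φ : IrrepFamily a) {e e' : ℕ}
    (P : PRIRData a k Φ e) (Q : PRIRData a k Φ e')
    (r : P.Path) (s : Q.Path) (i : Fin e) (j : Fin e') : Mat d (a + k + k) :=
  ((multSW d a (Φ.rep (P.endOf r)) /
      Real.sqrt (multSW d (a + k) P.rep * multSW d (a + k) Q.rep) : ℝ) : ℂ) •
    (extOp (Nat.le_add_right (a + k) k)
        (Eop d (a + k) P.rep i (P.basis ⟨r, ⟨0, Φ.dim_pos _⟩⟩)) *
      Vk d a k *
      extOp (Nat.le_add_right (a + k) k)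
        (Eop d (a + k) Q.rep (Q.basis ⟨s, ⟨0, Φ.dim_pos _⟩⟩) j))

/-- The projectors `F_μ(α) = Σ_{r_{μ/α}} Σ_{k_μ} F^{r r}_{k k}`. -/
def Fproj (d a k : ℕ) (Φ : IrrepFamily a) {e : ℕ}
    (P : PRIRData a k Φ e) (α : Φ.Label) : Mat d (a + k + k) :=
  ∑ r : {r : P.Path // P.endOf r = α}, ∑ i : Fin e, Fop d a k Φ P P r.1 r.1 i i

/-- Eigenvalues `λ_μ(α) = (k!·C(N,k)/d^N)·(m_μ d_α)/(m_α d_μ)` of the MPBT operator. -/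
def lambdaEig (d a k : ℕ) (Φ : IrrepFamily a) {e : ℕ}
    (P : PRIRData a k Φ e) (α : Φ.Label) : ℝ :=
  ((Nat.factorial k * Nat.choose (a + k) k : ℝ) / (d : ℝ) ^ (a + k)) *
    (multSW d (a + k) P.rep * (Φ.dim α : ℝ)) / (multSW d a (Φ.rep α) * (e : ℝ))

/-- A family of irreps of `S(a+k)` in PRIR form relative to `Φ`, one chosen
representative for each isomorphism class (pairwise non-isomorphic and complete). -/
structure PRIRFamily (a k : ℕ) (Φ : IrrepFamily a) where
  Label : Type
  [instFintype : Fintype Label]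
  [instDecEq : DecidableEq Label]
  dim : Label → ℕ
  prir : ∀ ℓ, PRIRData a k Φ (dim ℓ)
  noniso : ∀ ℓ ℓ', ℓ ≠ ℓ' → ∀ T : Matrix (Fin (dim ℓ)) (Fin (dim ℓ')) ℂ,
      (∀ σ, (prir ℓ).rep σ * T = T * (prir ℓ').rep σ) → T = 0
  complete : ∀ (e : ℕ) (ψ : Equiv.Perm (Fin (a + k)) →* Matrix (Fin e) (Fin e) ℂ),
      IsUnitaryIrrep ψ → ∃ ℓ, ∃ T : Matrix (Fin (dim ℓ)) (Fin e) ℂ,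
        ∃ T' : Matrix (Fin e) (Fin (dim ℓ)) ℂ,
          T * T' = 1 ∧ T' * T = 1 ∧ ∀ σ, (prir ℓ).rep σ * T = T * ψ σ

attribute [instance] PRIRFamily.instFintype PRIRFamily.instDecEq

/-- The signal states `σ_i` of the MPBT scheme, for a tuple `v` of (distinct) ports:
the ports are factors `0,…,a+k-1` and `B̃_j` (resp. `C_j`) is factor `a+k+j`. -/
def sigmaOp (d a k : ℕ) (v : Fin k → Fin (a + k)) : Mat d (a + k + k) :=
  ((1 : ℂ) / (d : ℂ) ^ a) •
    ((List.finRange k).map fun j : Fin k =>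
      Pplus d (a + k + k) (Fin.castLE (Nat.le_add_right (a + k) k) (v j))
        ⟨a + k + (j : ℕ), by have := j.isLt; omega⟩).prod

/-- The MPBT operator `ρ = Σ_{i ∈ I} σ_i`. -/
def rhoOp (d a k : ℕ) : Mat d (a + k + k) :=
  ∑ v : {v : Fin k → Fin (a + k) // Function.Injective v}, sigmaOp d a k v.1

/-- `P⁺_{A_i,C}`, tensored with the identity on the remaining ports. -/
def PplusTuple (d a k : ℕ) (v : Fin k → Fin (a + k)) : Mat d (a + k + k) :=
  ((List.finRange k).map fun j : Fin k =>
    Pplus d (a + k + k) (Fin.castLE (Nat.le_add_right (a + k) k) (v j))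
      ⟨a + k + (j : ℕ), by have := j.isLt; omega⟩).prod

/-- The increasing enumeration of the ports not appearing in `v`. -/
def compEnum {a k : ℕ} (v : Fin k → Fin (a + k)) (hv : Function.Injective v) :
    Fin a → Fin (a + k) := fun i =>
  (((Finset.image v Finset.univ)ᶜ.orderIsoOfFin (by
      rw [Finset.card_compl, Finset.card_image_of_injective _ hv, Finset.card_univ,
        Fintype.card_fin, Fintype.card_fin]
      omega)) i).1

/-- Placement of an operator on the tensor factors enumerated by `w`,
tensored with the identity on the remaining factors. -/
def placeOp {d a n : ℕ} (w : Fin a → Fin n) (X : Mat d a) : Mat d n :=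
  Matrix.of fun f g =>
    if ∀ i : Fin n, (∀ j, w j ≠ i) → f i = g i
    then X (fun j => f (w j)) (fun j => g (w j)) else 0

/-- `U^{⊗N} ⊗ Ū^{⊗k}`. -/
def Upow (d N k : ℕ) (U : Matrix (Fin d) (Fin d) ℂ) : Mat d (N + k) :=
  Matrix.of fun f g =>
    ∏ i : Fin (N + k),
      if (i : ℕ) < N then U (f i) (g i) else (starRingEnd ℂ) (U (f i) (g i))

/-- A family of concrete unitary irreps of a subgroup `H ⊆ S(n)`. -/
structure SubIrrepFamily (n : ℕ) (H : Subgroup (Equiv.Perm (Fin n))) where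
  Label : Type
  [instFintype : Fintype Label]
  [instDecEq : DecidableEq Label]
  dim : Label → ℕ
  rep : ∀ ℓ, H →* Matrix (Fin (dim ℓ)) (Fin (dim ℓ)) ℂ
  irrep : ∀ ℓ, IsUnitaryIrrep (rep ℓ)

attribute [instance] SubIrrepFamily.instFintype SubIrrepFamily.instDecEq

/-- An irrep of `S(n)` whose basis is adapted to the subgroup `H` (PRIR form). -/
structure PRIRSubData (n : ℕ) (H : Subgroup (Equiv.Perm (Fin n)))
    (Ψ : SubIrrepFamily n H) (e : ℕ) where
  rep : Equiv.Perm (Fin n) →* Matrix (Fin e) (Fin e) ℂ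
  irrep : IsUnitaryIrrep rep
  Path : Type
  [instFintypePath : Fintype Path]
  [instDecEqPath : DecidableEq Path]
  endOf : Path → Ψ.Label
  basis : ((r : Path) × Fin (Ψ.dim (endOf r))) ≃ Fin e
  block_diag : ∀ (h : H) (r : Path) (l l' : Fin (Ψ.dim (endOf r))),
      rep (h : Equiv.Perm (Fin n)) (basis ⟨r, l⟩) (basis ⟨r, l'⟩) = Ψ.rep (endOf r) h l l'
  block_off : ∀ (h : H) (r r' : Path), r ≠ r' →
      ∀ (l : Fin (Ψ.dim (endOf r))) (l' : Fin (Ψ.dim (endOf r'))),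
      rep (h : Equiv.Perm (Fin n)) (basis ⟨r, l⟩) (basis ⟨r', l'⟩) = 0

attribute [instance] PRIRSubData.instFintypePath PRIRSubData.instDecEqPath

/-- A family of pairwise non-isomorphic irreps of `S(n)` in PRIR form relative to `H`. -/
structure PRIRSubFamily (n : ℕ) (H : Subgroup (Equiv.Perm (Fin n)))
    (Ψ : SubIrrepFamily n H) where
  Label : Type
  [instFintype : Fintype Label]
  [instDecEq : DecidableEq Label]
  dim : Label → ℕ
  prir : ∀ ℓ, PRIRSubData n H Ψ (dim ℓ)
  noniso : ∀ ℓ ℓ', ℓ ≠ ℓ' → ∀ T : Matrix (Fin (dim ℓ)) (Fin (dim ℓ')) ℂ,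
      (∀ σ, (prir ℓ).rep σ * T = T * (prir ℓ').rep σ) → T = 0

attribute [instance] PRIRSubFamily.instFintype PRIRSubFamily.instDecEq

end

noncomputable section AuxAlg

open Matrix

lemma Vperm_mul (d n : ℕ) (σ τ : Equiv.Perm (Fin n)) :
    Vperm d n σ * Vperm d n τ = Vperm d n (σ * τ) := by
  ext f g
  rw [Matrix.mul_apply]
  rw [Finset.sum_eq_single (f ∘ σ)]
  · simp only [Vperm, Matrix.of_apply, if_pos rfl, one_mul]
    have : (f ∘ ⇑σ) ∘ ⇑τ = f ∘ ⇑(σ * τ) := by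
      funext x; simp [Equiv.Perm.coe_mul]
    rw [this]; simp
  · intro b _ hb
    simp only [Vperm, Matrix.of_apply]
    rw [if_neg (fun hh => hb hh.symm), zero_mul]
  · intro h; exact absurd (Finset.mem_univ _) h

lemma Vperm_conjTranspose (d n : ℕ) (σ : Equiv.Perm (Fin n)) :
    (Vperm d n σ)ᴴ = Vperm d n σ⁻¹ := by
  ext f g
  simp only [Matrix.conjTranspose_apply, Vperm, Matrix.of_apply]
  have h : (g ∘ ⇑σ = f) ↔ (f ∘ ⇑σ⁻¹ = g) := by
    constructor
    · rintro rfl; funext x; simp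
    · rintro rfl; funext x; simp
  by_cases hc : g ∘ ⇑σ = f
  · rw [if_pos hc, if_pos (h.mp hc)]; simp
  · rw [if_neg hc, if_neg (fun hh => hc (h.mpr hh))]; simp

lemma rep_inv_eq {G : Type*} [Group G] {e : ℕ}
    (φ : G →* Matrix (Fin e) (Fin e) ℂ)
    (hφ : ∀ g, (φ g)ᴴ * φ g = 1) (g : G) : φ g⁻¹ = (φ g)ᴴ := by
  have h2 : φ g * (φ g)ᴴ = 1 := mul_eq_one_comm.mp (hφ g)
  calc φ g⁻¹ = φ g⁻¹ * (φ g * (φ g)ᴴ) := by rw [h2, mul_one]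
    _ = (φ g⁻¹ * φ g) * (φ g)ᴴ := by rw [mul_assoc]
    _ = (φ g)ᴴ := by rw [← MonoidHom.map_mul, inv_mul_cancel, MonoidHom.map_one, one_mul]

lemma schur_sum {G : Type*} [Group G] [Fintype G] {e : ℕ}
    (φ : G →* Matrix (Fin e) (Fin e) ℂ) (hφ : IsUnitaryIrrep φ) (he : e ≠ 0)
    (i k m j : Fin e) :
    ∑ g : G, φ g m i * φ g⁻¹ k j
      = (if i = k then 1 else 0) * (if m = j then 1 else 0) * (Fintype.card G / e) := by
  classical
  set M : Matrix (Fin e) (Fin e) ℂ := Matrix.single i k 1 with hM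
  set X : Matrix (Fin e) (Fin e) ℂ := ∑ g : G, φ g * M * φ g⁻¹ with hX
  have hcomm : ∀ h : G, X * φ h = φ h * X := by
    intro h
    have e1 : φ h * X = ∑ g : G, φ h * (φ g * M * φ g⁻¹) := Finset.mul_sum _ _ _
    have e2 : X * φ h = ∑ g : G, (φ g * M * φ g⁻¹) * φ h := Finset.sum_mul _ _ _
    rw [e1, e2]
    refine Fintype.sum_equiv (Equiv.mulLeft h⁻¹) _ _ ?_
    intro x
    simp only [Equiv.coe_mulLeft]
    have h1 : φ h * φ (h⁻¹ * x) = φ x := by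
      rw [← MonoidHom.map_mul]; congr 1; group
    have h2 : φ (h⁻¹ * x)⁻¹ = φ x⁻¹ * φ h := by
      rw [← MonoidHom.map_mul]; congr 1; group
    rw [h2]
    simp only [← mul_assoc]
    rw [h1]
  obtain ⟨c, hc⟩ := hφ.2 X hcomm
  have htrM : M.trace = if i = k then 1 else 0 := by
    rw [hM]
    by_cases h : i = k
    · subst h; simp [Matrix.trace, Matrix.diag, Matrix.single,
        Finset.sum_ite_eq, and_self]
    · rw [if_neg h]
      simp only [Matrix.trace, Matrix.diag, Matrix.single, Matrix.of_apply]
      apply Finset.sum_eq_zero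
      intro x _
      rw [if_neg]
      rintro ⟨rfl, rfl⟩; exact h rfl
  have htr : X.trace = (Fintype.card G : ℂ) * M.trace := by
    rw [hX, Matrix.trace_sum]
    have h1 : ∀ g : G, (φ g * M * φ g⁻¹).trace = M.trace := by
      intro g
      rw [Matrix.trace_mul_cycle, ← MonoidHom.map_mul, inv_mul_cancel, MonoidHom.map_one, one_mul]
    simp [h1, Finset.sum_const, nsmul_eq_mul]
  have hE : (e : ℂ) ≠ 0 := Nat.cast_ne_zero.mpr he
  have hce : c * e = (Fintype.card G : ℂ) * M.trace := by
    have h0 := htr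
    rw [hc, Matrix.trace_smul, Matrix.trace_one] at h0
    simpa [Fintype.card_fin, smul_eq_mul] using h0
  have hcval : c = (Fintype.card G : ℂ) * M.trace / e := by
    rw [eq_div_iff hE]; exact hce
  have hentry : ∀ (A B : Matrix (Fin e) (Fin e) ℂ), (A * M * B) m j = A m i * B k j := by
    intro A B
    rw [Matrix.mul_apply]
    have h1 : ∀ q, (A * M) m q = A m i * (if q = k then 1 else 0) := by
      intro q
      rw [Matrix.mul_apply, hM]
      rw [Finset.sum_eq_single i]
      · by_cases h : q = k
        · subst h; simp [Matrix.single]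
        · simp only [Matrix.single, Matrix.of_apply]
          rw [if_neg (fun hh => h hh.2.symm), if_neg h, mul_zero]
      · intro b _ hb
        simp only [Matrix.single, Matrix.of_apply]
        rw [if_neg (fun hh => hb hh.1.symm), mul_zero]
      · intro hmem; exact absurd (Finset.mem_univ _) hmem
    simp only [h1]
    rw [Finset.sum_eq_single k]
    · simp
    · intro b _ hb; rw [if_neg hb, mul_zero, zero_mul]
    · intro hmem; exact absurd (Finset.mem_univ _) hmem
  have hXmj : X m j = ∑ g : G, φ g m i * φ g⁻¹ k j := by
    rw [hX, Matrix.sum_apply]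
    exact Finset.sum_congr rfl fun g _ => hentry _ _
  have hone : ((c • (1 : Matrix (Fin e) (Fin e) ℂ)) m j) = c * (if m = j then 1 else 0) := by
    simp [Matrix.one_apply, mul_ite]
  rw [← hXmj, hc, hone, hcval, htrM]
  ring

end AuxAlg

noncomputable section AuxAlg2

open Matrix

lemma Eop_mul_Eop {d m e : ℕ} (φ : Equiv.Perm (Fin m) →* Matrix (Fin e) (Fin e) ℂ)
    (hφ : IsUnitaryIrrep φ) (he : e ≠ 0) (i j k l : Fin e) :
    Eop d m φ i j * Eop d m φ k l = if j = k then Eop d m φ i l else 0 := by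
  classical
  have hfac : ((Nat.factorial m : ℕ) : ℂ) ≠ 0 :=
    Nat.cast_ne_zero.mpr (Nat.factorial_ne_zero m)
  have hE : (e : ℂ) ≠ 0 := Nat.cast_ne_zero.mpr he
  have key : ∀ ρ : Equiv.Perm (Fin m),
      (∑ τ : Equiv.Perm (Fin m), φ τ⁻¹ j i * φ (τ⁻¹ * ρ)⁻¹ l k)
        = (if j = k then 1 else 0) * φ ρ⁻¹ l i * ((Nat.factorial m : ℂ) / e) := by
    intro ρ
    have h1 : ∀ τ : Equiv.Perm (Fin m),
        φ (τ⁻¹ * ρ)⁻¹ l k = ∑ m' : Fin e, φ ρ⁻¹ l m' * φ τ m' k := by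
      intro τ
      have hg : (τ⁻¹ * ρ)⁻¹ = ρ⁻¹ * τ := by group
      rw [hg, MonoidHom.map_mul, Matrix.mul_apply]
    calc ∑ τ : Equiv.Perm (Fin m), φ τ⁻¹ j i * φ (τ⁻¹ * ρ)⁻¹ l k
        = ∑ τ : Equiv.Perm (Fin m), ∑ m' : Fin e,
            φ ρ⁻¹ l m' * (φ τ m' k * φ τ⁻¹ j i) := by
          refine Finset.sum_congr rfl fun τ _ => ?_
          rw [h1 τ, Finset.mul_sum]
          exact Finset.sum_congr rfl fun m' _ => by ring
      _ = ∑ m' : Fin e, φ ρ⁻¹ l m' * ∑ τ : Equiv.Perm (Fin m), φ τ m' k * φ τ⁻¹ j i := by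
          rw [Finset.sum_comm]
          exact Finset.sum_congr rfl fun m' _ => (Finset.mul_sum _ _ _).symm
      _ = ∑ m' : Fin e, φ ρ⁻¹ l m' *
            ((if k = j then 1 else 0) * (if m' = i then 1 else 0)
              * ((Fintype.card (Equiv.Perm (Fin m)) : ℂ) / e)) := by
          exact Finset.sum_congr rfl fun m' _ => by rw [schur_sum φ hφ he k j m' i]
      _ = (if j = k then 1 else 0) * φ ρ⁻¹ l i * ((Nat.factorial m : ℂ) / e) := by
          rw [Finset.sum_eq_single i]
          · rw [if_pos rfl, Fintype.card_perm, Fintype.card_fin]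
            by_cases h : j = k
            · rw [if_pos h, if_pos h.symm]; ring
            · rw [if_neg h, if_neg (fun hh => h hh.symm)]; ring
          · intro b _ hb; rw [if_neg hb]; ring
          · intro hmem; exact absurd (Finset.mem_univ _) hmem
  have expand : ∀ τ : Equiv.Perm (Fin m),
      (φ τ⁻¹ j i • Vperm d m τ) * (∑ σ : Equiv.Perm (Fin m), φ σ⁻¹ l k • Vperm d m σ)
        = ∑ ρ : Equiv.Perm (Fin m), (φ τ⁻¹ j i * φ (τ⁻¹ * ρ)⁻¹ l k) • Vperm d m ρ := by
    intro τ
    rw [Finset.mul_sum]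
    refine Fintype.sum_equiv (Equiv.mulLeft τ) _ _ ?_
    intro σ
    simp only [Equiv.coe_mulLeft]
    rw [smul_mul_assoc, mul_smul_comm, smul_smul, Vperm_mul]
    congr 2
    · congr 1; group
  unfold Eop
  rw [smul_mul_assoc, mul_smul_comm, smul_smul, Finset.sum_mul]
  have h2 : (∑ τ : Equiv.Perm (Fin m),
        (φ τ⁻¹ j i • Vperm d m τ) * ∑ σ : Equiv.Perm (Fin m), φ σ⁻¹ l k • Vperm d m σ)
      = ∑ ρ : Equiv.Perm (Fin m),
          ((if j = k then 1 else 0) * φ ρ⁻¹ l i * ((Nat.factorial m : ℂ) / e))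
            • Vperm d m ρ := by
    calc (∑ τ : Equiv.Perm (Fin m),
        (φ τ⁻¹ j i • Vperm d m τ) * ∑ σ : Equiv.Perm (Fin m), φ σ⁻¹ l k • Vperm d m σ)
        = ∑ τ : Equiv.Perm (Fin m), ∑ ρ : Equiv.Perm (Fin m),
            (φ τ⁻¹ j i * φ (τ⁻¹ * ρ)⁻¹ l k) • Vperm d m ρ :=
          Finset.sum_congr rfl fun τ _ => expand τ
      _ = ∑ ρ : Equiv.Perm (Fin m), ∑ τ : Equiv.Perm (Fin m),
            (φ τ⁻¹ j i * φ (τ⁻¹ * ρ)⁻¹ l k) • Vperm d m ρ := Finset.sum_comm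
      _ = ∑ ρ : Equiv.Perm (Fin m),
            (∑ τ : Equiv.Perm (Fin m), φ τ⁻¹ j i * φ (τ⁻¹ * ρ)⁻¹ l k) • Vperm d m ρ :=
          Finset.sum_congr rfl fun ρ _ => (Finset.sum_smul).symm
      _ = _ := Finset.sum_congr rfl fun ρ _ => by rw [key ρ]
  rw [h2]
  by_cases hjk : j = k
  · rw [if_pos hjk]
    simp only [if_pos hjk, one_mul]
    rw [Finset.smul_sum, Finset.smul_sum]
    refine Finset.sum_congr rfl fun ρ _ => ?_
    rw [smul_smul, smul_smul]
    congr 1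
    field_simp
  · rw [if_neg hjk]
    simp only [if_neg hjk, zero_mul]
    simp

lemma Eop_conjTranspose {d m e : ℕ} (φ : Equiv.Perm (Fin m) →* Matrix (Fin e) (Fin e) ℂ)
    (hφ : ∀ g, (φ g)ᴴ * φ g = 1) (i j : Fin e) :
    (Eop d m φ i j)ᴴ = Eop d m φ j i := by
  unfold Eop
  rw [Matrix.conjTranspose_smul, Matrix.conjTranspose_sum]
  have hsc : star ((e : ℂ) / (Nat.factorial m : ℂ)) = ((e : ℂ) / (Nat.factorial m : ℂ)) := by
    rw [star_div₀]
    norm_cast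
  rw [hsc]
  congr 1
  refine Fintype.sum_equiv (Equiv.inv (Equiv.Perm (Fin m))) _ _ ?_
  intro τ
  simp only [Equiv.inv_apply]
  rw [Matrix.conjTranspose_smul, Vperm_conjTranspose]
  congr 1
  rw [rep_inv_eq φ hφ τ]
  simp [Matrix.conjTranspose_apply]

lemma sum_Eop_mul_Eop {d m e : ℕ} (φ : Equiv.Perm (Fin m) →* Matrix (Fin e) (Fin e) ℂ)
    (hφ : IsUnitaryIrrep φ) (he : e ≠ 0) (l : Fin e) :
    ∑ i : Fin e, Eop d m φ i l * Eop d m φ l i = Pop d m φ := by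
  unfold Pop
  refine Finset.sum_congr rfl fun i _ => ?_
  rw [Eop_mul_Eop φ hφ he, if_pos rfl]

lemma Pop_mul_Pop {d m e : ℕ} (φ : Equiv.Perm (Fin m) →* Matrix (Fin e) (Fin e) ℂ)
    (hφ : IsUnitaryIrrep φ) (he : e ≠ 0) :
    Pop d m φ * Pop d m φ = Pop d m φ := by
  unfold Pop
  rw [Finset.sum_mul]
  calc (∑ i : Fin e, Eop d m φ i i * ∑ j : Fin e, Eop d m φ j j)
      = ∑ i : Fin e, ∑ j : Fin e, (if i = j then Eop d m φ i j else 0) := by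
        refine Finset.sum_congr rfl fun i _ => ?_
        rw [Finset.mul_sum]
        exact Finset.sum_congr rfl fun j _ => Eop_mul_Eop φ hφ he i i j j
    _ = ∑ i : Fin e, Eop d m φ i i := by
        refine Finset.sum_congr rfl fun i _ => ?_
        rw [Finset.sum_ite_eq]
        simp

lemma Pop_conjTranspose {d m e : ℕ} (φ : Equiv.Perm (Fin m) →* Matrix (Fin e) (Fin e) ℂ)
    (hφ : ∀ g, (φ g)ᴴ * φ g = 1) :
    (Pop d m φ)ᴴ = Pop d m φ := by
  unfold Pop
  rw [Matrix.conjTranspose_sum]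
  exact Finset.sum_congr rfl fun i _ => Eop_conjTranspose φ hφ i i

lemma trace_Pop_eq {d m e : ℕ} (φ : Equiv.Perm (Fin m) →* Matrix (Fin e) (Fin e) ℂ)
    (hφ : IsUnitaryIrrep φ) (he : e ≠ 0) :
    0 ≤ multSW d m φ ∧ Matrix.trace (Pop d m φ) = ((multSW d m φ * e : ℝ) : ℂ) := by
  have hP : Pop d m φ = (Pop d m φ)ᴴ * Pop d m φ := by
    conv_lhs => rw [← Pop_mul_Pop φ hφ he]
    rw [Pop_conjTranspose φ hφ.1]
  set A := Pop d m φ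
  have key : Matrix.trace (Aᴴ * A)
      = ((∑ j : Fin m → Fin d, ∑ i : Fin m → Fin d, Complex.normSq (A i j) : ℝ) : ℂ) := by
    rw [Matrix.trace]
    push_cast
    refine Finset.sum_congr rfl fun j _ => ?_
    rw [Matrix.diag_apply, Matrix.mul_apply]
    refine Finset.sum_congr rfl fun i _ => ?_
    rw [Matrix.conjTranspose_apply, mul_comm]
    rw [Complex.star_def, Complex.mul_conj]
  have hre : Matrix.trace A = (((Matrix.trace A).re : ℝ) : ℂ) ∧ 0 ≤ (Matrix.trace A).re := by
    rw [hP, key]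
    constructor
    · simp
    · simp only [Complex.ofReal_re]
      refine Finset.sum_nonneg fun j _ => Finset.sum_nonneg fun i _ => Complex.normSq_nonneg _
  have hmult : multSW d m φ = (Matrix.trace A).re / e := rfl
  constructor
  · rw [hmult]
    exact div_nonneg hre.2 (by positivity)
  · rw [hmult]
    rw [div_mul_cancel₀ _ (by exact_mod_cast he : (e:ℝ) ≠ 0)]
    exact hre.1

end AuxAlg2

noncomputable section AuxProd

open Matrix

lemma Pplus_apply {d n : ℕ} (r s : Fin n) (f g : Fin n → Fin d) :
    Pplus d n r s f g =
      if f r = f s ∧ g r = g s ∧ ∀ t : Fin n, t ≠ r → t ≠ s → f t = g t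
      then (1 : ℂ) / d else 0 := rfl

lemma list_prod_Pplus {d n : ℕ} (l : List (Fin n × Fin n))
    (hne : ∀ p ∈ l, p.1 ≠ p.2)
    (hdisj : l.Pairwise fun p q => p.1 ≠ q.1 ∧ p.1 ≠ q.2 ∧ p.2 ≠ q.1 ∧ p.2 ≠ q.2)
    (F G : Fin n → Fin d) :
    (l.map fun p => Pplus d n p.1 p.2).prod F G =
      if (∀ p ∈ l, F p.1 = F p.2) ∧ (∀ p ∈ l, G p.1 = G p.2) ∧
         (∀ t : Fin n, (∀ p ∈ l, t ≠ p.1 ∧ t ≠ p.2) → F t = G t)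
      then ((1 : ℂ) / d) ^ l.length else 0 := by
  induction l generalizing F G with
  | nil =>
    simp only [List.map_nil, List.prod_nil, List.length_nil, pow_zero,
      List.not_mem_nil, false_implies, implies_true, true_and, forall_const]
    rw [Matrix.one_apply]
    by_cases h : F = G
    · rw [if_pos h, if_pos (fun t => congrFun h t)]
    · rw [if_neg h, if_neg (fun hc => h (funext hc))]
  | cons p l IH =>
    have hp12 : p.1 ≠ p.2 := hne p List.mem_cons_self
    have hne_l : ∀ q ∈ l, q.1 ≠ q.2 := fun q hq => hne q (List.mem_cons_of_mem p hq)
    have hdisj_l := (List.pairwise_cons.mp hdisj).2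
    have hhead : ∀ q ∈ l, p.1 ≠ q.1 ∧ p.1 ≠ q.2 ∧ p.2 ≠ q.1 ∧ p.2 ≠ q.2 :=
      (List.pairwise_cons.mp hdisj).1
    simp only [List.map_cons, List.prod_cons, List.length_cons]
    rw [Matrix.mul_apply]
    by_cases hF : F p.1 = F p.2
    case neg =>
      rw [Finset.sum_eq_zero, if_neg]
      · rintro ⟨h1, -, -⟩; exact hF (h1 p List.mem_cons_self)
      · intro H _
        rw [Pplus_apply, if_neg (fun hc => hF hc.1), zero_mul]
    case pos =>
      set R := (l.map fun q => Pplus d n q.1 q.2).prod with hR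
      set Hc : Fin d → (Fin n → Fin d) := fun c t => if t = p.1 ∨ t = p.2 then c else F t
        with hHc
      have hinj : ∀ c ∈ (Finset.univ : Finset (Fin d)), ∀ c' ∈ Finset.univ,
          Hc c = Hc c' → c = c' := by
        intro c _ c' _ h
        have := congrFun h p.1
        simpa [hHc] using this
      have hvanish : ∀ H ∈ (Finset.univ : Finset (Fin n → Fin d)),
          H ∉ Finset.univ.image Hc → Pplus d n p.1 p.2 F H * R H G = 0 := by
        intro H _ hH
        rcases eq_or_ne (Pplus d n p.1 p.2 F H) 0 with h0 | h0
        · rw [h0, zero_mul]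
        · exfalso
          apply hH
          have hcond : F p.1 = F p.2 ∧ H p.1 = H p.2 ∧
              ∀ t, t ≠ p.1 → t ≠ p.2 → F t = H t := by
            by_contra hc
            exact h0 (by rw [Pplus_apply, if_neg hc])
          refine Finset.mem_image.mpr ⟨H p.1, Finset.mem_univ _, ?_⟩
          funext t
          simp only [hHc]
          by_cases ht1 : t = p.1
          · subst ht1; rw [if_pos (Or.inl rfl)]
          · by_cases ht2 : t = p.2
            · subst ht2; rw [if_pos (Or.inr rfl)]; exact hcond.2.1
            · rw [if_neg (by tauto)]
              exact hcond.2.2 t ht1 ht2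
      have hsum : (∑ H : Fin n → Fin d, Pplus d n p.1 p.2 F H * R H G)
          = ∑ c : Fin d, Pplus d n p.1 p.2 F (Hc c) * R (Hc c) G := by
        rw [← Finset.sum_image (f := fun H => Pplus d n p.1 p.2 F H * R H G) hinj]
        exact (Finset.sum_subset (Finset.subset_univ _) hvanish).symm
      have hPp : ∀ c : Fin d, Pplus d n p.1 p.2 F (Hc c) = 1 / d := by
        intro c
        rw [Pplus_apply, if_pos]
        refine ⟨hF, ?_, ?_⟩
        · simp [hHc]
        · intro t ht1 ht2
          simp only [hHc]
          rw [if_neg (by tauto)]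
      have havoid1 : ∀ q ∈ l, p.1 ≠ q.1 ∧ p.1 ≠ q.2 :=
        fun q hq => ⟨(hhead q hq).1, (hhead q hq).2.1⟩
      have havoid2 : ∀ q ∈ l, p.2 ≠ q.1 ∧ p.2 ≠ q.2 :=
        fun q hq => ⟨(hhead q hq).2.2.1, (hhead q hq).2.2.2⟩
      have hHq : ∀ c : Fin d, ∀ q ∈ l, Hc c q.1 = F q.1 ∧ Hc c q.2 = F q.2 := by
        intro c q hq
        obtain ⟨h1, h2, h3, h4⟩ := hhead q hq
        constructor <;> · simp only [hHc]; rw [if_neg (by tauto)]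
      have hcond_iff : ∀ c : Fin d,
          ((∀ q ∈ l, (Hc c) q.1 = (Hc c) q.2) ∧ (∀ q ∈ l, G q.1 = G q.2) ∧
            (∀ t : Fin n, (∀ q ∈ l, t ≠ q.1 ∧ t ≠ q.2) → (Hc c) t = G t))
          ↔ (((∀ q ∈ l, F q.1 = F q.2) ∧ (∀ q ∈ l, G q.1 = G q.2) ∧
              (∀ t : Fin n, t ≠ p.1 → t ≠ p.2 → (∀ q ∈ l, t ≠ q.1 ∧ t ≠ q.2) → F t = G t))
             ∧ (c = G p.1 ∧ c = G p.2)) := by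
        intro c
        constructor
        · rintro ⟨h1, h2, h3⟩
          refine ⟨⟨?_, h2, ?_⟩, ?_, ?_⟩
          · intro q hq
            obtain ⟨e1, e2⟩ := hHq c q hq
            rw [← e1, ← e2]; exact h1 q hq
          · intro t ht1 ht2 htl
            have h4 := h3 t htl
            rwa [show Hc c t = F t by simp only [hHc]; rw [if_neg (by tauto)]] at h4
          · have h4 := h3 p.1 (havoid1)
            rwa [show Hc c p.1 = c by simp [hHc]] at h4
          · have h4 := h3 p.2 (havoid2)
            rwa [show Hc c p.2 = c by simp [hHc]] at h4
        · rintro ⟨⟨h1, h2, h3⟩, hc1, hc2⟩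
          refine ⟨?_, h2, ?_⟩
          · intro q hq
            obtain ⟨e1, e2⟩ := hHq c q hq
            rw [e1, e2]; exact h1 q hq
          · intro t htl
            by_cases ht1 : t = p.1
            · subst ht1; rw [show Hc c p.1 = c by simp [hHc]]; exact hc1
            · by_cases ht2 : t = p.2
              · subst ht2; rw [show Hc c p.2 = c by simp [hHc]]; exact hc2
              · rw [show Hc c t = F t by simp only [hHc]; rw [if_neg (by tauto)]]
                exact h3 t ht1 ht2 htl
      rw [hsum]
      have hterm : ∀ c : Fin d,
          Pplus d n p.1 p.2 F (Hc c) * R (Hc c) G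
          = ((1:ℂ)/d) * (if (((∀ q ∈ l, F q.1 = F q.2) ∧ (∀ q ∈ l, G q.1 = G q.2) ∧
              (∀ t : Fin n, t ≠ p.1 → t ≠ p.2 → (∀ q ∈ l, t ≠ q.1 ∧ t ≠ q.2) → F t = G t))
             ∧ (c = G p.1 ∧ c = G p.2)) then ((1:ℂ)/d) ^ l.length else 0) := by
        intro c
        rw [hPp c, IH hne_l hdisj_l]
        congr 1
        exact if_congr (hcond_iff c) rfl rfl
      rw [Finset.sum_congr rfl (fun c _ => hterm c)]
      rw [← Finset.mul_sum]
      by_cases hA : ((∀ q ∈ l, F q.1 = F q.2) ∧ (∀ q ∈ l, G q.1 = G q.2) ∧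
              (∀ t : Fin n, t ≠ p.1 → t ≠ p.2 → (∀ q ∈ l, t ≠ q.1 ∧ t ≠ q.2) → F t = G t))
      · by_cases hG : G p.1 = G p.2
        · have hiff : ∀ c : Fin d, (((∀ q ∈ l, F q.1 = F q.2) ∧ (∀ q ∈ l, G q.1 = G q.2) ∧
              (∀ t : Fin n, t ≠ p.1 → t ≠ p.2 → (∀ q ∈ l, t ≠ q.1 ∧ t ≠ q.2) → F t = G t))
             ∧ (c = G p.1 ∧ c = G p.2)) ↔ c = G p.1 := by
            intro c
            constructor
            · rintro ⟨-, h, -⟩; exact h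
            · intro h; exact ⟨hA, h, h.trans hG⟩
          have : (∑ c : Fin d, if (((∀ q ∈ l, F q.1 = F q.2) ∧ (∀ q ∈ l, G q.1 = G q.2) ∧
              (∀ t : Fin n, t ≠ p.1 → t ≠ p.2 → (∀ q ∈ l, t ≠ q.1 ∧ t ≠ q.2) → F t = G t))
             ∧ (c = G p.1 ∧ c = G p.2)) then ((1:ℂ)/d) ^ l.length else 0)
              = ((1:ℂ)/d) ^ l.length := by
            rw [Finset.sum_congr rfl (fun c _ =>
              if_congr (hiff c) rfl rfl)]
            rw [Finset.sum_ite_eq']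
            simp
          rw [this, if_pos, pow_succ]
          · ring
          · refine ⟨?_, ?_, ?_⟩
            · intro q hq
              rcases List.mem_cons.mp hq with rfl | hq'
              · exact hF
              · exact hA.1 q hq'
            · intro q hq
              rcases List.mem_cons.mp hq with rfl | hq'
              · exact hG
              · exact hA.2.1 q hq'
            · intro t ht
              have h1 := ht p List.mem_cons_self
              exact hA.2.2 t h1.1 h1.2 (fun q hq => ht q (List.mem_cons_of_mem p hq))
        · rw [Finset.sum_eq_zero, mul_zero, if_neg]
          · rintro ⟨-, h2, -⟩
            exact hG (h2 p List.mem_cons_self)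
          · intro c _
            rw [if_neg]
            rintro ⟨-, hc1, hc2⟩
            exact hG (hc1 ▸ hc2)
      · rw [Finset.sum_eq_zero, mul_zero, if_neg]
        · rintro ⟨h1, h2, h3⟩
          refine hA ⟨fun q hq => h1 q (List.mem_cons_of_mem p hq),
            fun q hq => h2 q (List.mem_cons_of_mem p hq), ?_⟩
          intro t ht1 ht2 htl
          exact h3 t (fun q hq => by
            rcases List.mem_cons.mp hq with rfl | hq'
            · exact ⟨ht1, ht2⟩
            · exact htl q hq')
        · intro c _
          rw [if_neg]
          rintro ⟨h, -⟩
          exact hA h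

end AuxProd

noncomputable section AuxSplice

open Matrix

lemma splice_castAdd {d a b : ℕ} (f : Fin a → Fin d) (t : Fin b → Fin d) (i : Fin a) :
    splice f t (Fin.castAdd b i) = f i := by
  simp only [splice, Fin.coe_castAdd]
  rw [dif_pos i.isLt]

lemma splice_natAdd {d a b : ℕ} (f : Fin a → Fin d) (t : Fin b → Fin d) (j : Fin b) :
    splice f t (Fin.natAdd a j) = t j := by
  simp only [splice]
  rw [dif_neg (by simp : ¬ ((Fin.natAdd a j : Fin (a+b)) : ℕ) < a)]
  congr 1
  exact Fin.ext (by simp)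

def spliceEquiv (d a b : ℕ) : ((Fin a → Fin d) × (Fin b → Fin d)) ≃ (Fin (a + b) → Fin d) where
  toFun p := splice p.1 p.2
  invFun F := (fun i => F (Fin.castAdd b i), fun j => F (Fin.natAdd a j))
  left_inv p := by
    refine Prod.ext ?_ ?_ <;> funext x
    · exact splice_castAdd p.1 p.2 x
    · exact splice_natAdd p.1 p.2 x
  right_inv F := by
    funext i
    simp only [splice]
    split
    · exact congrArg F (Fin.ext (by simp))
    · exact congrArg F (Fin.ext (by simp; omega))

lemma sum_splice {M : Type*} [AddCommMonoid M] {d a b : ℕ}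
    (F : (Fin (a + b) → Fin d) → M) :
    ∑ H : Fin (a + b) → Fin d, F H
      = ∑ p : (Fin a → Fin d) × (Fin b → Fin d), F (splice p.1 p.2) :=
  ((spliceEquiv d a b).sum_comp F).symm

lemma trace_ptraceLast {d a b : ℕ} (X : Mat d (a + b)) :
    Matrix.trace (ptraceLast a b X) = Matrix.trace X := by
  rw [Matrix.trace, Matrix.trace]
  simp only [Matrix.diag, ptraceLast, Matrix.of_apply]
  rw [sum_splice (fun H => X H H), Fintype.sum_prod_type]

end AuxSplice

noncomputable section AuxCore

open Matrix

lemma splice_lt {d a b : ℕ} (f : Fin a → Fin d) (t : Fin b → Fin d)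
    (i : Fin (a + b)) (h : (i : ℕ) < a) : splice f t i = f ⟨(i : ℕ), h⟩ :=
  dif_pos h

lemma splice_ge {d a b : ℕ} (f : Fin a → Fin d) (t : Fin b → Fin d)
    (i : Fin (a + b)) (h : ¬ (i : ℕ) < a) :
    splice f t i = t ⟨(i : ℕ) - a, by have := i.isLt; omega⟩ :=
  dif_neg h

lemma Vk_apply' {d a k : ℕ} (hd : 0 < d)
    (H₁ K₁ : Fin (a + k) → Fin d) (H₂ K₂ : Fin k → Fin d) :
    Vk d a k (splice H₁ H₂) (splice K₁ K₂) =
      if (∀ j : Fin k, H₁ ⟨a + (j : ℕ), by have := j.isLt; omega⟩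
            = H₂ ⟨k - 1 - (j : ℕ), by have := j.isLt; omega⟩) ∧
         (∀ j : Fin k, K₁ ⟨a + (j : ℕ), by have := j.isLt; omega⟩
            = K₂ ⟨k - 1 - (j : ℕ), by have := j.isLt; omega⟩) ∧
         (∀ i : Fin (a + k), (i : ℕ) < a → H₁ i = K₁ i)
      then 1 else 0 := by
  classical
  set n := a + k + k with hn
  set pairf : Fin k → Fin n × Fin n := fun j =>
    (⟨a + (j : ℕ), by have := j.isLt; omega⟩,
     ⟨a + k + k - 1 - (j : ℕ), by have := j.isLt; omega⟩) with hpairf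
  have hmap : ((List.finRange k).map fun j : Fin k =>
      Pplus d (a + k + k) ⟨a + (j : ℕ), by have := j.isLt; omega⟩
        ⟨a + k + k - 1 - (j : ℕ), by have := j.isLt; omega⟩)
      = ((List.finRange k).map pairf).map fun p => Pplus d n p.1 p.2 := by
    rw [List.map_map]
    rfl
  have hne : ∀ p ∈ (List.finRange k).map pairf, p.1 ≠ p.2 := by
    intro p hp
    obtain ⟨j, -, rfl⟩ := List.mem_map.mp hp
    have hj := j.isLt
    refine Fin.ne_of_val_ne ?_
    show a + (j : ℕ) ≠ a + k + k - 1 - (j : ℕ)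
    omega
  have hdisj : ((List.finRange k).map pairf).Pairwise
      fun p q => p.1 ≠ q.1 ∧ p.1 ≠ q.2 ∧ p.2 ≠ q.1 ∧ p.2 ≠ q.2 := by
    rw [List.pairwise_map]
    refine List.Pairwise.imp ?_ (List.nodup_finRange k)
    intro j j' hjj'
    have hj := j.isLt
    have hj' := j'.isLt
    have hvne : (j : ℕ) ≠ (j' : ℕ) := fun h => hjj' (Fin.ext h)
    refine ⟨Fin.ne_of_val_ne ?_, Fin.ne_of_val_ne ?_, Fin.ne_of_val_ne ?_,
      Fin.ne_of_val_ne ?_⟩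
    · show a + (j : ℕ) ≠ a + (j' : ℕ); omega
    · show a + (j : ℕ) ≠ a + k + k - 1 - (j' : ℕ); omega
    · show a + k + k - 1 - (j : ℕ) ≠ a + (j' : ℕ); omega
    · show a + k + k - 1 - (j : ℕ) ≠ a + k + k - 1 - (j' : ℕ); omega
  have hmem : ∀ (P : Fin n × Fin n → Prop),
      (∀ p ∈ (List.finRange k).map pairf, P p) ↔ ∀ j : Fin k, P (pairf j) := by
    intro P
    constructor
    · intro h j; exact h _ (List.mem_map.mpr ⟨j, List.mem_finRange j, rfl⟩)
    · rintro h p hp; obtain ⟨j, -, rfl⟩ := List.mem_map.mp hp; exact h j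
  have hFr : ∀ j : Fin k, splice H₁ H₂ (pairf j).1
      = H₁ ⟨a + (j : ℕ), by have := j.isLt; omega⟩ := by
    intro j
    have hj := j.isLt
    exact dif_pos (show a + (j : ℕ) < a + k by omega)
  have hFs : ∀ j : Fin k, splice H₁ H₂ (pairf j).2
      = H₂ ⟨k - 1 - (j : ℕ), by have := j.isLt; omega⟩ := by
    intro j
    have hj := j.isLt
    refine (dif_neg (show ¬ (a + k + k - 1 - (j : ℕ) < a + k) by omega)).trans ?_
    congr 1
    refine Fin.ext ?_
    show a + k + k - 1 - (j : ℕ) - (a + k) = k - 1 - (j : ℕ)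
    omega
  have hGr : ∀ j : Fin k, splice K₁ K₂ (pairf j).1
      = K₁ ⟨a + (j : ℕ), by have := j.isLt; omega⟩ := by
    intro j
    have hj := j.isLt
    exact dif_pos (show a + (j : ℕ) < a + k by omega)
  have hGs : ∀ j : Fin k, splice K₁ K₂ (pairf j).2
      = K₂ ⟨k - 1 - (j : ℕ), by have := j.isLt; omega⟩ := by
    intro j
    have hj := j.isLt
    refine (dif_neg (show ¬ (a + k + k - 1 - (j : ℕ) < a + k) by omega)).trans ?_
    congr 1
    refine Fin.ext ?_
    show a + k + k - 1 - (j : ℕ) - (a + k) = k - 1 - (j : ℕ)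
    omega
  show ((d : ℂ) ^ k • ((List.finRange k).map fun j : Fin k =>
      Pplus d (a + k + k) ⟨a + (j : ℕ), by have := j.isLt; omega⟩
        ⟨a + k + k - 1 - (j : ℕ), by have := j.isLt; omega⟩).prod)
      (splice H₁ H₂) (splice K₁ K₂) = _
  rw [Matrix.smul_apply, hmap, list_prod_Pplus _ hne hdisj (splice H₁ H₂) (splice K₁ K₂)]
  have hlen : ((List.finRange k).map pairf).length = k := by simp
  have hcond : ((∀ p ∈ (List.finRange k).map pairf, splice H₁ H₂ p.1 = splice H₁ H₂ p.2) ∧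
      (∀ p ∈ (List.finRange k).map pairf, splice K₁ K₂ p.1 = splice K₁ K₂ p.2) ∧
      (∀ t : Fin n, (∀ p ∈ (List.finRange k).map pairf, t ≠ p.1 ∧ t ≠ p.2) →
        splice H₁ H₂ t = splice K₁ K₂ t))
      ↔ ((∀ j : Fin k, H₁ ⟨a + (j : ℕ), by have := j.isLt; omega⟩
            = H₂ ⟨k - 1 - (j : ℕ), by have := j.isLt; omega⟩) ∧
         (∀ j : Fin k, K₁ ⟨a + (j : ℕ), by have := j.isLt; omega⟩
            = K₂ ⟨k - 1 - (j : ℕ), by have := j.isLt; omega⟩) ∧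
         (∀ i : Fin (a + k), (i : ℕ) < a → H₁ i = K₁ i)) := by
    refine and_congr ?_ (and_congr ?_ ?_)
    · rw [hmem]
      exact forall_congr' fun j => by rw [hFr j, hFs j]
    · rw [hmem]
      exact forall_congr' fun j => by rw [hGr j, hGs j]
    · constructor
      · intro h i hia
        have hi : (i : ℕ) < n := by have := i.isLt; omega
        have h1 := h ⟨(i : ℕ), hi⟩ ?_
        · have e1 : splice H₁ H₂ (⟨(i : ℕ), hi⟩ : Fin n) = H₁ i := by
            refine (dif_pos (show (i : ℕ) < a + k by have := i.isLt; omega)).trans ?_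
            congr 1
          have e2 : splice K₁ K₂ (⟨(i : ℕ), hi⟩ : Fin n) = K₁ i := by
            refine (dif_pos (show (i : ℕ) < a + k by have := i.isLt; omega)).trans ?_
            congr 1
          rwa [e1, e2] at h1
        · rw [hmem]
          intro j
          have hj := j.isLt
          constructor
          · refine Fin.ne_of_val_ne ?_
            show (i : ℕ) ≠ a + (j : ℕ)
            omega
          · refine Fin.ne_of_val_ne ?_
            show (i : ℕ) ≠ a + k + k - 1 - (j : ℕ)
            omega
      · intro h t ht
        rw [hmem] at ht
        have htn := t.isLt
        have htlt : (t : ℕ) < a := by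
          by_contra hc
          push_neg at hc
          by_cases h2 : (t : ℕ) < a + k
          · have hjlt : (t : ℕ) - a < k := by omega
            refine (ht ⟨(t : ℕ) - a, hjlt⟩).1 (Fin.ext ?_)
            show (t : ℕ) = a + ((t : ℕ) - a)
            omega
          · have hjlt : a + k + k - 1 - (t : ℕ) < k := by omega
            refine (ht ⟨a + k + k - 1 - (t : ℕ), hjlt⟩).2 (Fin.ext ?_)
            show (t : ℕ) = a + k + k - 1 - (a + k + k - 1 - (t : ℕ))
            omega
        rw [splice_lt H₁ H₂ t (by omega), splice_lt K₁ K₂ t (by omega)]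
        exact h _ htlt
  rw [if_congr hcond rfl rfl, smul_eq_mul]
  simp only [hlen]
  have hdC : (d : ℂ) ≠ 0 := Nat.cast_ne_zero.mpr hd.ne'
  split
  · rw [one_div, inv_pow, mul_inv_cancel₀ (pow_ne_zero _ hdC)]
  · rw [mul_zero]

end AuxCore

noncomputable section AuxCore2

open Matrix

lemma extOp_splice {d m k' : ℕ} (X : Mat d m) (f₁ g₁ : Fin m → Fin d)
    (f₂ g₂ : Fin k' → Fin d) :
    extOp (Nat.le_add_right m k') X (splice f₁ f₂) (splice g₁ g₂)
      = if f₂ = g₂ then X f₁ g₁ else 0 := by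
  simp only [extOp, Matrix.of_apply]
  have hres1 : (fun i : Fin m => splice f₁ f₂ (Fin.castLE (Nat.le_add_right m k') i)) = f₁ := by
    funext i
    refine (dif_pos (show ((Fin.castLE (Nat.le_add_right m k') i : Fin (m + k')) : ℕ) < m
      from i.isLt)).trans ?_
    congr 1
  have hres2 : (fun i : Fin m => splice g₁ g₂ (Fin.castLE (Nat.le_add_right m k') i)) = g₁ := by
    funext i
    refine (dif_pos (show ((Fin.castLE (Nat.le_add_right m k') i : Fin (m + k')) : ℕ) < m
      from i.isLt)).trans ?_
    congr 1
  have hcond : (∀ i : Fin (m + k'), m ≤ (i : ℕ) → splice f₁ f₂ i = splice g₁ g₂ i) ↔ f₂ = g₂ := by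
    constructor
    · intro h
      funext j
      have hj := j.isLt
      have h1 := h ⟨m + (j : ℕ), by omega⟩ (by show m ≤ m + (j : ℕ); omega)
      have e1 : splice f₁ f₂ (⟨m + (j : ℕ), by omega⟩ : Fin (m + k')) = f₂ j := by
        refine (dif_neg (show ¬ (m + (j : ℕ) < m) by omega)).trans ?_
        congr 1
        refine Fin.ext ?_
        show m + (j : ℕ) - m = (j : ℕ)
        omega
      have e2 : splice g₁ g₂ (⟨m + (j : ℕ), by omega⟩ : Fin (m + k')) = g₂ j := by
        refine (dif_neg (show ¬ (m + (j : ℕ) < m) by omega)).trans ?_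
        congr 1
        refine Fin.ext ?_
        show m + (j : ℕ) - m = (j : ℕ)
        omega
      rwa [e1, e2] at h1
    · rintro rfl
      intro i hi
      rw [splice_ge _ _ _ (by omega), splice_ge _ _ _ (by omega)]
  rw [hres1, hres2, if_congr hcond rfl rfl]

lemma ptraceLast_smul {d a b : ℕ} (c : ℂ) (M : Mat d (a + b)) :
    ptraceLast a b (c • M) = c • ptraceLast a b M := by
  ext f g
  simp only [ptraceLast, Matrix.of_apply, Matrix.smul_apply, smul_eq_mul, Finset.mul_sum]

lemma ptraceLast_sum {d a b : ℕ} {ι : Type*} (s : Finset ι) (M : ι → Mat d (a + b)) :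
    ptraceLast a b (∑ i ∈ s, M i) = ∑ i ∈ s, ptraceLast a b (M i) := by
  ext f g
  simp only [ptraceLast, Matrix.of_apply, Matrix.sum_apply]
  rw [Finset.sum_comm]

def buildFn (d a k : ℕ) (K₁ : Fin (a + k) → Fin d) (t : Fin k → Fin d) :
    Fin (a + k) → Fin d :=
  fun i => if _h : (i : ℕ) < a then K₁ i
    else t ⟨k - 1 - ((i : ℕ) - a), by have := i.isLt; omega⟩

lemma buildFn_eq {d a k : ℕ} (K₁ : Fin (a + k) → Fin d) (t : Fin k → Fin d)
    (h : ∀ j : Fin k, K₁ ⟨a + (j : ℕ), by have := j.isLt; omega⟩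
        = t ⟨k - 1 - (j : ℕ), by have := j.isLt; omega⟩) :
    buildFn d a k K₁ t = K₁ := by
  funext i
  by_cases hi : (i : ℕ) < a
  · exact dif_pos hi
  · refine (dif_neg hi).trans ?_
    have hik := i.isLt
    have hj : (i : ℕ) - a < k := by omega
    have h1 := h ⟨(i : ℕ) - a, hj⟩
    have e : (⟨a + ((⟨(i : ℕ) - a, hj⟩ : Fin k) : ℕ), by omega⟩ : Fin (a + k)) = i :=
      Fin.ext (show a + ((i : ℕ) - a) = (i : ℕ) by omega)
    rw [e] at h1
    exact h1.symm

lemma buildFn_ge {d a k : ℕ} (K₁ : Fin (a + k) → Fin d) (t : Fin k → Fin d)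
    (i : Fin (a + k)) (hi : ¬ (i : ℕ) < a) :
    buildFn d a k K₁ t i = t ⟨k - 1 - ((i : ℕ) - a), by have := i.isLt; omega⟩ :=
  dif_neg hi

lemma core_ptrace {d a k : ℕ} (hd : 0 < d) (X Y : Mat d (a + k)) :
    ptraceLast (a + k) k
      (extOp (Nat.le_add_right (a + k) k) X * Vk d a k *
        extOp (Nat.le_add_right (a + k) k) Y)
      = X * Y := by
  classical
  ext f g
  set A := extOp (Nat.le_add_right (a + k) k) X with hA
  set B := extOp (Nat.le_add_right (a + k) k) Y with hB
  have hstep1 : ∀ (t K₂ : Fin k → Fin d) (K₁ : Fin (a + k) → Fin d),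
      (A * Vk d a k) (splice f t) (splice K₁ K₂)
      = if (∀ j : Fin k, K₁ ⟨a + (j : ℕ), by have := j.isLt; omega⟩
            = K₂ ⟨k - 1 - (j : ℕ), by have := j.isLt; omega⟩)
        then X f (buildFn d a k K₁ t) else 0 := by
    intro t K₂ K₁
    rw [Matrix.mul_apply]
    rw [sum_splice (fun H => A (splice f t) H * Vk d a k H (splice K₁ K₂))]
    rw [Fintype.sum_prod_type]
    have hinner : ∀ H₁ : Fin (a + k) → Fin d,
        (∑ H₂ : Fin k → Fin d, A (splice f t) (splice H₁ H₂)
          * Vk d a k (splice H₁ H₂) (splice K₁ K₂))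
        = X f H₁ * Vk d a k (splice H₁ t) (splice K₁ K₂) := by
      intro H₁
      rw [Finset.sum_eq_single t]
      · rw [hA, extOp_splice, if_pos rfl]
      · intro b _ hb
        rw [hA, extOp_splice, if_neg (fun h => hb h.symm), zero_mul]
      · intro hmem; exact absurd (Finset.mem_univ _) hmem
    rw [Finset.sum_congr rfl fun H₁ _ => hinner H₁]
    rw [Finset.sum_congr rfl fun H₁ _ => by rw [Vk_apply' hd H₁ K₁ t K₂]]
    have c1 : ∀ j : Fin k, buildFn d a k K₁ t ⟨a + (j : ℕ), by have := j.isLt; omega⟩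
        = t ⟨k - 1 - (j : ℕ), by have := j.isLt; omega⟩ := by
      intro j
      have hj := j.isLt
      refine (dif_neg (show ¬ (a + (j : ℕ) < a) by omega)).trans ?_
      congr 1
      refine Fin.ext ?_
      show k - 1 - (a + (j : ℕ) - a) = k - 1 - (j : ℕ)
      omega
    have c3 : ∀ i : Fin (a + k), (i : ℕ) < a → buildFn d a k K₁ t i = K₁ i :=
      fun i hi => dif_pos hi
    rw [Finset.sum_eq_single (buildFn d a k K₁ t)]
    · by_cases hK : (∀ j : Fin k, K₁ ⟨a + (j : ℕ), by have := j.isLt; omega⟩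
            = K₂ ⟨k - 1 - (j : ℕ), by have := j.isLt; omega⟩)
      · rw [if_pos ⟨c1, hK, c3⟩, if_pos hK, mul_one]
      · rw [if_neg (fun hc => hK hc.2.1), if_neg hK, mul_zero]
    · intro H₁ _ hne
      rw [if_neg, mul_zero]
      rintro ⟨h1, h2, h3⟩
      apply hne
      funext i
      by_cases hi : (i : ℕ) < a
      · exact (h3 i hi).trans (c3 i hi).symm
      · have hik := i.isLt
        have hj : (i : ℕ) - a < k := by omega
        have h1' := h1 ⟨(i : ℕ) - a, hj⟩
        have e : (⟨a + ((⟨(i : ℕ) - a, hj⟩ : Fin k) : ℕ), by omega⟩ : Fin (a + k)) = i :=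
          Fin.ext (show a + ((i : ℕ) - a) = (i : ℕ) by omega)
        rw [e] at h1'
        rw [buildFn_ge K₁ t i hi]
        exact h1'
    · intro hmem; exact absurd (Finset.mem_univ _) hmem
  have hentry : ∀ t : Fin k → Fin d,
      (A * Vk d a k * B) (splice f t) (splice g t)
      = ∑ K₁ : Fin (a + k) → Fin d,
          (if (∀ j : Fin k, K₁ ⟨a + (j : ℕ), by have := j.isLt; omega⟩
                = t ⟨k - 1 - (j : ℕ), by have := j.isLt; omega⟩)
           then X f (buildFn d a k K₁ t) else 0) * Y K₁ g := by
    intro t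
    rw [Matrix.mul_apply]
    rw [sum_splice (fun K => (A * Vk d a k) (splice f t) K * B K (splice g t))]
    rw [Fintype.sum_prod_type]
    refine Finset.sum_congr rfl fun K₁ _ => ?_
    rw [Finset.sum_eq_single t]
    · rw [hstep1 t t K₁, hB, extOp_splice, if_pos rfl]
    · intro b _ hb
      rw [hB, extOp_splice, if_neg hb, mul_zero]
    · intro hmem; exact absurd (Finset.mem_univ _) hmem
  show (∑ t : Fin k → Fin d, (A * Vk d a k * B) (splice f t) (splice g t)) = (X * Y) f g
  rw [Finset.sum_congr rfl fun t _ => hentry t]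
  have hred : ∀ (t : Fin k → Fin d) (K₁ : Fin (a + k) → Fin d),
      (if (∀ j : Fin k, K₁ ⟨a + (j : ℕ), by have := j.isLt; omega⟩
            = t ⟨k - 1 - (j : ℕ), by have := j.isLt; omega⟩)
       then X f (buildFn d a k K₁ t) else 0)
      = (if (∀ j : Fin k, K₁ ⟨a + (j : ℕ), by have := j.isLt; omega⟩
            = t ⟨k - 1 - (j : ℕ), by have := j.isLt; omega⟩)
       then X f K₁ else 0) := by
    intro t K₁
    by_cases h : (∀ j : Fin k, K₁ ⟨a + (j : ℕ), by have := j.isLt; omega⟩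
            = t ⟨k - 1 - (j : ℕ), by have := j.isLt; omega⟩)
    · rw [if_pos h, if_pos h, buildFn_eq K₁ t h]
    · rw [if_neg h, if_neg h]
  rw [Finset.sum_congr rfl fun t _ => Finset.sum_congr rfl fun K₁ _ => by rw [hred t K₁]]
  rw [Finset.sum_comm]
  rw [Matrix.mul_apply]
  refine Finset.sum_congr rfl fun K₁ _ => ?_
  rw [← Finset.sum_mul]
  congr 1
  have hiff : ∀ t : Fin k → Fin d,
      (∀ j : Fin k, K₁ ⟨a + (j : ℕ), by have := j.isLt; omega⟩
          = t ⟨k - 1 - (j : ℕ), by have := j.isLt; omega⟩)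
        ↔ t = fun j : Fin k => K₁ ⟨a + (k - 1 - (j : ℕ)), by have := j.isLt; omega⟩ := by
    intro t
    constructor
    · intro h
      funext j'
      have hj' := j'.isLt
      have h1 := h ⟨k - 1 - (j' : ℕ), by omega⟩
      have e : (⟨k - 1 - ((⟨k - 1 - (j' : ℕ), by omega⟩ : Fin k) : ℕ), by omega⟩ : Fin k) = j' :=
        Fin.ext (show k - 1 - (k - 1 - (j' : ℕ)) = (j' : ℕ) by omega)
      rw [e] at h1
      exact h1.symm
    · rintro rfl
      intro j
      have hj := j.isLt
      show K₁ ⟨a + (j : ℕ), by omega⟩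
          = K₁ ⟨a + (k - 1 - (k - 1 - (j : ℕ))), by omega⟩
      congr 1
      exact Fin.ext (show a + (j : ℕ) = a + (k - 1 - (k - 1 - (j : ℕ))) by omega)
  rw [Finset.sum_congr rfl fun t _ => if_congr (hiff t) rfl rfl]
  rw [Finset.sum_ite_eq']
  simp

end AuxCore2

/-- `tr_{(k)}(F_μ(α)) = m_{μ/α}·(m_α/m_μ)·P_μ` (partial trace over
factors `n-2k+1,…,n-k`, `P_μ` on the first `n-k = a+k` factors); consequently
`tr F_μ(α) = m_{μ/α}·m_α·d_μ`. -/
theorem statement_16 (d a k : ℕ) (hd : 2 ≤ d) (hk : 1 ≤ k) (hka : k ≤ a)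
    (hN : 2 ≤ a + k)
    (Φ : IrrepFamily a) (e : ℕ) (P : PRIRData a k Φ e) (α : Φ.Label)
    (hα : multSW d a (Φ.rep α) ≠ 0)
    (hμ : multSW d (a + k) P.rep ≠ 0)
    (hin : 0 < P.pathMult α) :
    ptraceLast (a + k) k (Fproj d a k Φ P α)
      = (((P.pathMult α : ℝ) *
            (multSW d a (Φ.rep α) / multSW d (a + k) P.rep) : ℝ) : ℂ) •
          Pop d (a + k) P.rep
    ∧ Matrix.trace (Fproj d a k Φ P α)
      = (((P.pathMult α : ℝ) * multSW d a (Φ.rep α) * (e : ℝ) : ℝ) : ℂ) := by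
  classical
  have hd0 : 0 < d := by omega
  have he : e ≠ 0 := by
    intro h0
    apply hμ
    show (Matrix.trace (Pop d (a + k) P.rep)).re / (e : ℝ) = 0
    have h1 : (e : ℝ) = 0 := by exact_mod_cast h0
    rw [h1, div_zero]
  obtain ⟨hμ0, htrP⟩ := trace_Pop_eq P.rep P.irrep he
  have hsqrt : Real.sqrt (multSW d (a + k) P.rep * multSW d (a + k) P.rep)
      = multSW d (a + k) P.rep := Real.sqrt_mul_self hμ0
  have hFop : ∀ (r : {r : P.Path // P.endOf r = α}) (i : Fin e),
      ptraceLast (a + k) k (Fop d a k Φ P P r.1 r.1 i i)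
      = ((multSW d a (Φ.rep α) / multSW d (a + k) P.rep : ℝ) : ℂ) •
          (Eop d (a + k) P.rep i (P.basis ⟨r.1, ⟨0, Φ.dim_pos _⟩⟩) *
           Eop d (a + k) P.rep (P.basis ⟨r.1, ⟨0, Φ.dim_pos _⟩⟩) i) := by
    intro r i
    unfold Fop
    rw [ptraceLast_smul, core_ptrace hd0]
    congr 1
    refine congrArg Complex.ofReal ?_
    rw [hsqrt, r.2]
  have hmain : ptraceLast (a + k) k (Fproj d a k Φ P α)
      = (((P.pathMult α : ℝ) *
            (multSW d a (Φ.rep α) / multSW d (a + k) P.rep) : ℝ) : ℂ) •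
          Pop d (a + k) P.rep := by
    unfold Fproj
    rw [ptraceLast_sum]
    rw [Finset.sum_congr rfl fun r _ => ptraceLast_sum Finset.univ
      (fun i : Fin e => Fop d a k Φ P P r.1 r.1 i i)]
    rw [Finset.sum_congr rfl fun r _ => Finset.sum_congr rfl fun i _ => hFop r i]
    rw [Finset.sum_congr rfl fun r _ => (Finset.smul_sum).symm]
    rw [Finset.sum_congr rfl fun r _ => by
      rw [sum_Eop_mul_Eop P.rep P.irrep he (P.basis ⟨r.1, ⟨0, Φ.dim_pos _⟩⟩)]]
    rw [Finset.sum_const, Finset.card_univ]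
    rw [show Fintype.card {r : P.Path // P.endOf r = α} = P.pathMult α from rfl]
    rw [← Nat.cast_smul_eq_nsmul ℂ, smul_smul]
    congr 1
    push_cast
    ring
  refine ⟨hmain, ?_⟩
  rw [← trace_ptraceLast (Fproj d a k Φ P α), hmain, Matrix.trace_smul, htrP, smul_eq_mul]
  rw [← Complex.ofReal_mul]
  refine congrArg Complex.ofReal ?_
  field_simp
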